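/- arXiv:1305.3188 — 2 statements merged into one kernel-verified Lean document; each statement's English description precedes it below -/
import Mathlib

section
/- Full-bunching ratio theorem: Fix an m × m unitary U, an output mode j, and an input configuration given by occupation numbers g : Fin m → ℕ with ∑_k g_k = n. Let r : Fin n → Fin m be the nondecreasing list in which each index k appears g_k times. Define the quantum full-bunching probability q_q = |per(A)|² / (n! ∏_k g_k!) where A_{i,k} = U_{j, r(k)}, and the classical full-bunching probability q_c = per(B)/n! where B_{i,k} = |U_{j,r(k)}|². If q_c ≠ 0, then q_q / q_c = n! / ∏_k g_k!. -/
open Finset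

/-- The permanent of an `n × n` complex matrix. -/
noncomputable def perm {n : ℕ} (A : Matrix (Fin n) (Fin n) ℂ) : ℂ :=
  ∑ σ : Equiv.Perm (Fin n), ∏ i, A i (σ i)

/-- The permanent of an `n × n` real matrix. -/
def permR {n : ℕ} (B : Matrix (Fin n) (Fin n) ℝ) : ℝ :=
  ∑ σ : Equiv.Perm (Fin n), ∏ i, B i (σ i)

/-- **Full-bunching ratio theorem.** With occupation numbers `g` summing to `n`,
`r` listing mode `k` with multiplicity `g k` (nondecreasingly),
quantum probability `q_q = |per A|²/(n! ∏ₖ g_k!)` with `A i k = U j (r k)`, and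
classical probability `q_c = per B / n!` with `B i k = |U j (r k)|²`:
if `q_c ≠ 0` then `q_q / q_c = n! / ∏ₖ g_k!`. -/
theorem full_bunching_ratio (m n : ℕ) (U : Matrix (Fin m) (Fin m) ℂ)
    (j : Fin m) (g : Fin m → ℕ) (hg : ∑ k, g k = n)
    (r : Fin n → Fin m) (hmono : Monotone r)
    (hr : ∀ i : Fin m, (Finset.univ.filter (fun k => r k = i)).card = g i)
    (A : Matrix (Fin n) (Fin n) ℂ) (hA : ∀ i k, A i k = U j (r k))
    (B : Matrix (Fin n) (Fin n) ℝ) (hB : ∀ i k, B i k = ‖U j (r k)‖ ^ 2)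
    (qq qc : ℝ)
    (hqq : qq = ‖perm A‖ ^ 2 / ((n.factorial : ℝ) * ∏ k, ((g k).factorial : ℝ)))
    (hqc : qc = permR B / (n.factorial : ℝ))
    (hqc0 : qc ≠ 0) :
    qq / qc = (n.factorial : ℝ) / ∏ k, ((g k).factorial : ℝ) := by
  set P : ℝ := ∏ k, ‖U j (r k)‖ ^ 2 with hP
  have hpermA : perm A = (n.factorial : ℂ) * ∏ k, U j (r k) := by
    unfold perm
    have h1 : ∀ σ : Equiv.Perm (Fin n), ∏ i, A i (σ i) = ∏ k, U j (r k) := by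
      intro σ
      rw [← Equiv.prod_comp σ (fun k => U j (r k))]
      exact Finset.prod_congr rfl fun i _ => hA i (σ i)
    rw [Finset.sum_congr rfl fun σ _ => h1 σ, Finset.sum_const, Finset.card_univ,
      Fintype.card_perm, Fintype.card_fin, nsmul_eq_mul]
  have hpermB : permR B = (n.factorial : ℝ) * P := by
    unfold permR
    have h1 : ∀ σ : Equiv.Perm (Fin n), ∏ i, B i (σ i) = P := by
      intro σ
      rw [hP, ← Equiv.prod_comp σ (fun k => ‖U j (r k)‖ ^ 2)]
      exact Finset.prod_congr rfl fun i _ => hB i (σ i)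
    rw [Finset.sum_congr rfl fun σ _ => h1 σ, Finset.sum_const, Finset.card_univ,
      Fintype.card_perm, Fintype.card_fin, nsmul_eq_mul]
  have habs : ‖perm A‖ ^ 2 = (n.factorial : ℝ) ^ 2 * P := by
    rw [hpermA, norm_mul, mul_pow, Complex.norm_natCast, hP]
    congr 1
    rw [norm_prod, ← Finset.prod_pow]
  have hn0 : (n.factorial : ℝ) ≠ 0 := Nat.cast_ne_zero.mpr n.factorial_ne_zero
  have hqcP : qc = P := by
    rw [hqc, hpermB, mul_comm, mul_div_assoc, div_self hn0, mul_one]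
  have hP0 : P ≠ 0 := hqcP ▸ hqc0
  have hG0 : (∏ k, ((g k).factorial : ℝ)) ≠ 0 :=
    Finset.prod_ne_zero_iff.mpr fun k _ => Nat.cast_ne_zero.mpr (g k).factorial_ne_zero
  rw [hqq, habs, hqcP]
  field_simp
end

section
/- For a 2 × 2 unitary U and two indistinguishable photons entering modes 1 and 2 (g = (1,1)), the probability that both exit in mode j is 2|U_{j,1}U_{j,2}|², exactly twice the classical probability |U_{j,1}|²|U_{j,2}|² — the Hong–Ou–Mandel 2! enhancement. -/
open Finset

lemma perm_univ_fin_two : (univ : Finset (Equiv.Perm (Fin 2))) = {1, Equiv.swap 0 1} := by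
  decide

/-- Hong–Ou–Mandel `2!` enhancement: for a `2 × 2` unitary `U` and two
indistinguishable photons, the quantum probability that both exit in mode `j`,
`q_q(j) = |per A|²/2!` with both rows of `A` equal to `(U j 0, U j 1)`, equals
`2·|U j 0 · U j 1|²`, twice the classical probability `|U j 0|²·|U j 1|²`. -/
theorem hom_two_factorial_enhancement (U : Matrix (Fin 2) (Fin 2) ℂ)
    (hU : U * U.conjTranspose = 1) (j : Fin 2)
    (A : Matrix (Fin 2) (Fin 2) ℂ) (hA : ∀ i k, A i k = U j k) :
    ‖perm A‖ ^ 2 / (Nat.factorial 2 : ℝ)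
      = 2 * ‖U j 0 * U j 1‖ ^ 2 ∧
    ‖perm A‖ ^ 2 / (Nat.factorial 2 : ℝ)
      = 2 * (‖U j 0‖ ^ 2 * ‖U j 1‖ ^ 2) := by
  have hperm : perm A = 2 * (U j 0 * U j 1) := by
    rw [perm, perm_univ_fin_two, Finset.sum_insert (by decide), Finset.sum_singleton,
      Fin.prod_univ_two, Fin.prod_univ_two]
    simp [hA, Equiv.swap_apply_left, Equiv.swap_apply_right]
    ring
  have h1 : ‖perm A‖ ^ 2 / (Nat.factorial 2 : ℝ)
      = 2 * ‖U j 0 * U j 1‖ ^ 2 := by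
    rw [hperm, norm_mul]
    simp [Nat.factorial]
    ring
  refine ⟨h1, ?_⟩
  rw [h1, norm_mul]
  ring
end
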